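/- Let G = (V, E, w, ⟨V_A, V_B⟩) be a game graph that contains no closed walk of strictly negative total weight, and let n = |V|. Then for every u ∈ V, e*_n(u) = e*(u), where e*_n(u) is the value of the n-round game at u and e*(u) is the value of the infinite-duration game at u, defined by e*(u) := min_σ max_τ max{0, −inf_{i ≥ 0} w(P_i)}, where σ : V_A → V and τ : V_B → V range over positional strategies, and P_i is the unique walk of length i starting at u in the graph G(σ, τ) in which every vertex of V_A keeps only the outgoing edge chosen by σ and every vertex of V_B keeps only the outgoing edge chosen by τ. -/

import Mathlib

open scoped Classical

/-- `IsWalk E u k`: the sequence `u 0, u 1, …, u k` is a walk in the directed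
graph with edge relation `E`. -/
def IsWalk {V : Type*} (E : V → V → Prop) (u : ℕ → V) (k : ℕ) : Prop :=
  ∀ i < k, E (u i) (u (i + 1))

/-- The total weight of the walk `u 0, …, u k`. -/
def walkWeight {V : Type*} (w : V → V → ℤ) (u : ℕ → V) (k : ℕ) : ℤ :=
  ∑ i ∈ Finset.range k, w (u i) (u (i + 1))

/-- A (history-dependent) strategy is a map from nonempty histories to vertices.
A history `x_0 ⋯ x_j` is encoded as the list `[x_j, …, x_0]` (most recent first).
`AliceStrat E VA σ` says: for every history ending (currently) at a vertex
`x ∈ V_A`, the strategy moves along an edge of the graph. -/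
def AliceStrat {V : Type*} (E : V → V → Prop) (VA : Set V) (σ : List V → V) : Prop :=
  ∀ (x : V) (h : List V), x ∈ VA → E x (σ (x :: h))

/-- A strategy for Bob: Bob controls the vertices of `V_B = V_Aᶜ`. -/
def BobStrat {V : Type*} (E : V → V → Prop) (VA : Set V) (τ : List V → V) : Prop :=
  ∀ (x : V) (h : List V), x ∉ VA → E x (τ (x :: h))

/-- Auxiliary: the pair (current vertex, reversed history of previous vertices)
after `k` rounds of play from `u` with strategies `σ` (Alice, on `V_A`) and
`τ` (Bob, on `V_B = V_Aᶜ`). -/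
noncomputable def playAux {V : Type*} (VA : Set V) (σ τ : List V → V) (u : V) :
    ℕ → V × List V
  | 0 => (u, [])
  | k + 1 =>
    let p := playAux VA σ τ u k
    (if p.1 ∈ VA then σ (p.1 :: p.2) else τ (p.1 :: p.2), p.1 :: p.2)

/-- `play VA σ τ u k` is the vertex `u_k` of the consistent path
`u_0 = u, u_1, u_2, …` with respect to the strategies `σ` and `τ`. -/
noncomputable def play {V : Type*} (VA : Set V) (σ τ : List V → V) (u : V) (k : ℕ) : V :=
  (playAux VA σ τ u k).1

/-- `eVal w VA i σ τ u = max {0, - min_{0 ≤ j ≤ i} Σ_{k<j} w(u_k, u_{k+1})}`,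
the minimum over all prefixes of the consistent path of length `i` from `u`. -/
noncomputable def eVal {V : Type*} (w : V → V → ℤ) (VA : Set V) (i : ℕ)
    (σ τ : List V → V) (u : V) : ℤ :=
  max 0 (-(Finset.range (i + 1)).inf' ⟨0, Finset.mem_range.mpr (Nat.succ_pos i)⟩
    (fun j => walkWeight w (play VA σ τ u) j))

/-- The value `e*_i(u)` of the `i`-round game at `u`:
`min_σ max_τ e_{σ,τ}(u)` over all (history-dependent) strategies. -/
noncomputable def eStar {V : Type*} (E : V → V → Prop) (w : V → V → ℤ)
    (VA : Set V) (i : ℕ) (u : V) : ℤ :=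
  sInf {x : ℤ | ∃ σ, AliceStrat E VA σ ∧
    x = sSup {y : ℤ | ∃ τ, BobStrat E VA τ ∧ y = eVal w VA i σ τ u}}

/-- The play from `u` when both players use positional strategies: `s : V → V`
for Alice (on `V_A`) and `t : V → V` for Bob (on `V_B = V_Aᶜ`).  This is the
unique walk starting at `u` in the graph `G(s, t)` where every vertex keeps only
the outgoing edge chosen by its controller. -/
noncomputable def posPlay {V : Type*} (VA : Set V) (s t : V → V) (u : V) : ℕ → V
  | 0 => u
  | k + 1 =>
    let x := posPlay VA s t u k
    if x ∈ VA then s x else t x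

/-- The outcome `max {0, - inf_{i ≥ 0} w(P_i)}` of the infinite-duration game
from `u` under positional strategies `s` (Alice) and `t` (Bob), where `P_i` is
the unique walk of length `i` from `u` in `G(s, t)`. -/
noncomputable def posOutcome {V : Type*} (w : V → V → ℤ) (VA : Set V)
    (s t : V → V) (u : V) : ℤ :=
  max 0 (-sInf {z : ℤ | ∃ i : ℕ, z = walkWeight w (posPlay VA s t u) i})

/-- The value `e*(u)` of the infinite-duration energy game at `u`:
`min_σ max_τ max {0, - inf_{i ≥ 0} w(P_i)}` over positional strategies. -/
noncomputable def eStarInf {V : Type*} (E : V → V → Prop) (w : V → V → ℤ)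
    (VA : Set V) (u : V) : ℤ :=
  sInf {x : ℤ | ∃ s : V → V, (∀ v ∈ VA, E v (s v)) ∧
    x = sSup {y : ℤ | ∃ t : V → V, (∀ v ∉ VA, E v (t v)) ∧ y = posOutcome w VA s t u}}

namespace EnergyAux

set_option linter.unusedSectionVars false

variable {V : Type*} [Fintype V] [Nonempty V]
variable (E : V → V → Prop) (w : V → V → ℤ) (VA : Set V)

/-- A default valid successor. -/
noncomputable def s0 (hout : ∀ v : V, ∃ x, E v x) (v : V) : V := (hout v).choose

lemma s0_edge (hout : ∀ v : V, ∃ x, E v x) (v : V) : E v (s0 E hout v) := (hout v).choose_spec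

/-- Shift a strategy after a first move from `u`. -/
def shift (u : V) (σ : List V → V) : List V → V := fun l => σ (l ++ [u])

lemma play_zero (σ τ : List V → V) (u : V) : play VA σ τ u 0 = u := rfl

lemma play_one (σ τ : List V → V) (u : V) :
    play VA σ τ u 1 = if u ∈ VA then σ [u] else τ [u] := rfl

lemma playAux_shift (σ τ : List V → V) (u : V) (k : ℕ) :
    playAux VA σ τ u (k + 1) =
      ((playAux VA (shift u σ) (shift u τ) (play VA σ τ u 1) k).1,
       (playAux VA (shift u σ) (shift u τ) (play VA σ τ u 1) k).2 ++ [u]) := by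
  induction k with
  | zero => simp [playAux, play, shift]
  | succ k ih =>
    show (let p := playAux VA σ τ u (k+1);
      (if p.1 ∈ VA then σ (p.1 :: p.2) else τ (p.1 :: p.2), p.1 :: p.2)) = _
    simp only [ih]
    simp [playAux, shift]

lemma play_shift (σ τ : List V → V) (u : V) (k : ℕ) :
    play VA σ τ u (k + 1) = play VA (shift u σ) (shift u τ) (play VA σ τ u 1) k := by
  rw [play, playAux_shift]
  rfl

lemma playAux_congr (σ₁ σ₂ τ₁ τ₂ : List V → V) (u : V)
    (hσ : ∀ l : List V, l.getLast? = some u → σ₁ l = σ₂ l)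
    (hτ : ∀ l : List V, l.getLast? = some u → τ₁ l = τ₂ l) (k : ℕ) :
    playAux VA σ₁ τ₁ u k = playAux VA σ₂ τ₂ u k ∧
      ((playAux VA σ₁ τ₁ u k).1 :: (playAux VA σ₁ τ₁ u k).2).getLast? = some u := by
  induction k with
  | zero => simp [playAux]
  | succ k ih =>
    obtain ⟨h1, h2⟩ := ih
    constructor
    · show (let p := playAux VA σ₁ τ₁ u k;
        (if p.1 ∈ VA then σ₁ (p.1 :: p.2) else τ₁ (p.1 :: p.2), p.1 :: p.2)) = _
      simp only [playAux, ← h1]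
      by_cases h : (playAux VA σ₁ τ₁ u k).1 ∈ VA
      · simp only [if_pos h, hσ _ h2]
      · simp only [if_neg h, hτ _ h2]
    · show (let p := playAux VA σ₁ τ₁ u (k+1); (p.1 :: p.2)).getLast? = some u
      simp only [playAux]
      rw [List.getLast?_cons_cons]
      exact h2

lemma play_congr (σ₁ σ₂ τ₁ τ₂ : List V → V) (u : V)
    (hσ : ∀ l : List V, l.getLast? = some u → σ₁ l = σ₂ l)
    (hτ : ∀ l : List V, l.getLast? = some u → τ₁ l = τ₂ l) :
    play VA σ₁ τ₁ u = play VA σ₂ τ₂ u := by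
  funext k
  exact congrArg Prod.fst (playAux_congr VA σ₁ σ₂ τ₁ τ₂ u hσ hτ k).1

lemma eVal_congr (i : ℕ) (σ₁ σ₂ τ₁ τ₂ : List V → V) (u : V)
    (hσ : ∀ l : List V, l.getLast? = some u → σ₁ l = σ₂ l)
    (hτ : ∀ l : List V, l.getLast? = some u → τ₁ l = τ₂ l) :
    eVal w VA i σ₁ τ₁ u = eVal w VA i σ₂ τ₂ u := by
  unfold eVal
  rw [play_congr VA σ₁ σ₂ τ₁ τ₂ u hσ hτ]

lemma play_isWalk (σ τ : List V → V) (hσ : AliceStrat E VA σ) (hτ : BobStrat E VA τ)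
    (u : V) (k : ℕ) : IsWalk E (play VA σ τ u) k := by
  intro i _
  show E (playAux VA σ τ u i).1 (playAux VA σ τ u (i+1)).1
  simp only [playAux]
  by_cases h : (playAux VA σ τ u i).1 ∈ VA
  · simp only [if_pos h]; exact hσ _ _ h
  · simp only [if_neg h]; exact hτ _ _ h

lemma walkWeight_zero (p : ℕ → V) : walkWeight w p 0 = 0 := by simp [walkWeight]

lemma walkWeight_succ (p : ℕ → V) (k : ℕ) :
    walkWeight w p (k + 1) = walkWeight w p k + w (p k) (p (k + 1)) :=
  Finset.sum_range_succ _ _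

lemma walkWeight_congr (p q : ℕ → V) (k : ℕ) (h : ∀ i ≤ k, p i = q i) :
    walkWeight w p k = walkWeight w q k := by
  unfold walkWeight
  refine Finset.sum_congr rfl fun i hi => ?_
  rw [Finset.mem_range] at hi
  rw [h i (by omega), h (i+1) (by omega)]

lemma walkWeight_shift (σ τ : List V → V) (u : V) (j : ℕ) :
    walkWeight w (play VA σ τ u) (j + 1) =
      w u (play VA σ τ u 1) +
        walkWeight w (play VA (shift u σ) (shift u τ) (play VA σ τ u 1)) j := by
  have h2 : ∀ i ∈ Finset.range j, w (play VA σ τ u (i+1)) (play VA σ τ u (i+1+1)) =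
      w (play VA (shift u σ) (shift u τ) (play VA σ τ u 1) i)
        (play VA (shift u σ) (shift u τ) (play VA σ τ u 1) (i+1)) := fun i _ => by
    rw [play_shift VA σ τ u i, play_shift VA σ τ u (i+1)]
  unfold walkWeight
  rw [Finset.sum_range_succ' (fun i => w (play VA σ τ u i) (play VA σ τ u (i+1))) j,
    Finset.sum_congr rfl h2, add_comm]
  rfl

lemma inf'_range_succ_eq (i : ℕ) (f : ℕ → ℤ) :
    (Finset.range (i + 2)).inf' Finset.nonempty_range_add_one f =
      min (f 0) ((Finset.range (i + 1)).inf' Finset.nonempty_range_add_one (fun j => f (j + 1))) := by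
  apply le_antisymm
  · refine le_min (Finset.inf'_le _ (by simp)) (Finset.le_inf' _ _ fun j hj => ?_)
    exact Finset.inf'_le _ (by simp at hj ⊢; omega)
  · refine Finset.le_inf' _ _ fun j hj => ?_
    match j with
    | 0 => exact min_le_left _ _
    | (m+1) =>
      refine le_trans (min_le_right _ _) (Finset.inf'_le _ ?_)
      simp at hj ⊢; omega

lemma inf'_walk_nonpos (σ τ : List V → V) (u : V) (i : ℕ) :
    (Finset.range (i + 1)).inf' Finset.nonempty_range_add_one
      (fun j => walkWeight w (play VA σ τ u) j) ≤ 0 := by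
  have := Finset.inf'_le (s := Finset.range (i+1)) (b := 0)
    (fun j => walkWeight w (play VA σ τ u) j) (by simp)
  exact le_trans this (le_of_eq (walkWeight_zero w _))

lemma eVal_zero (σ τ : List V → V) (u : V) : eVal w VA 0 σ τ u = 0 := by
  simp [eVal, walkWeight]

lemma eVal_nonneg (i : ℕ) (σ τ : List V → V) (u : V) : 0 ≤ eVal w VA i σ τ u := le_max_left _ _

lemma eVal_succ (i : ℕ) (σ τ : List V → V) (u : V) :
    eVal w VA (i + 1) σ τ u =
      max 0 (eVal w VA i (shift u σ) (shift u τ) (play VA σ τ u 1)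
        - w u (play VA σ τ u 1)) := by
  unfold eVal
  rw [inf'_range_succ_eq]
  rw [Finset.inf'_congr Finset.nonempty_range_add_one rfl (fun j _ => walkWeight_shift _ _ σ τ u j)]
  have hadd : (Finset.range (i + 1)).inf' Finset.nonempty_range_add_one
      (fun j => w u (play VA σ τ u 1) +
        walkWeight w (play VA (shift u σ) (shift u τ) (play VA σ τ u 1)) j) =
      w u (play VA σ τ u 1) + (Finset.range (i + 1)).inf' Finset.nonempty_range_add_one
      (fun j => walkWeight w (play VA (shift u σ) (shift u τ) (play VA σ τ u 1)) j) := by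
    apply le_antisymm
    · obtain ⟨b, hb, hbe⟩ := Finset.exists_mem_eq_inf' (Finset.nonempty_range_add_one (n := i))
        (fun j => walkWeight w (play VA (shift u σ) (shift u τ) (play VA σ τ u 1)) j)
      rw [hbe]
      exact Finset.inf'_le _ hb
    · refine Finset.le_inf' _ _ fun j hj => ?_
      exact (add_le_add_iff_left _).2 (Finset.inf'_le _ hj)
  rw [hadd]
  have h0 : walkWeight w (play VA σ τ u) 0 = 0 := walkWeight_zero w _
  rw [h0]
  set c := w u (play VA σ τ u 1)
  set m := (Finset.range (i + 1)).inf' Finset.nonempty_range_add_one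
      (fun j => walkWeight w (play VA (shift u σ) (shift u τ) (play VA σ τ u 1)) j) with hm
  have hmle : m ≤ 0 := inf'_walk_nonpos _ _ _ _ _ i
  omega


/-- A bound on (negated) edge weights. -/
noncomputable def Wmax : ℤ :=
  (Finset.univ ×ˢ (Finset.univ : Finset V)).sup'
    (Finset.univ_nonempty.product Finset.univ_nonempty) (fun p => |w p.1 p.2|)

lemma abs_le_Wmax (x y : V) : |w x y| ≤ Wmax (V := V) w :=
  Finset.le_sup' (f := fun p : V × V => |w p.1 p.2|) (b := (x, y)) (by simp)

lemma Wmax_nonneg : 0 ≤ Wmax (V := V) w := by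
  obtain ⟨x⟩ := ‹Nonempty V›
  exact le_trans (abs_nonneg (w x x)) (abs_le_Wmax w x x)

lemma neg_Wmax_le (x y : V) : -Wmax (V := V) w ≤ w x y :=
  le_trans (neg_le_neg (abs_le_Wmax w x y)) (neg_abs_le (w x y))

lemma walkWeight_ge_of_le (p : ℕ → V) (k n : ℕ) (hk : k ≤ n) :
    -(n * Wmax (V := V) w) ≤ walkWeight w p k := by
  have h1 : ∀ i ∈ Finset.range k, -Wmax (V := V) w ≤ w (p i) (p (i+1)) :=
    fun i _ => neg_Wmax_le w _ _
  have h2 : ∑ _i ∈ Finset.range k, (-Wmax (V := V) w) ≤ walkWeight w p k :=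
    Finset.sum_le_sum h1
  have h3 : ∑ _i ∈ Finset.range k, (-Wmax (V := V) w) = -(k * Wmax (V := V) w) := by
    rw [Finset.sum_const, Finset.card_range, nsmul_eq_mul]; ring
  have h4 : (k : ℤ) * Wmax (V := V) w ≤ (n : ℤ) * Wmax (V := V) w :=
    mul_le_mul_of_nonneg_right (by exact_mod_cast hk) (Wmax_nonneg w)
  omega

lemma eVal_le (i : ℕ) (σ τ : List V → V) (u : V) :
    eVal w VA i σ τ u ≤ i * Wmax (V := V) w := by
  have h1 : -(i * Wmax (V := V) w) ≤ (Finset.range (i + 1)).inf' Finset.nonempty_range_add_one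
      (fun j => walkWeight w (play VA σ τ u) j) := by
    refine Finset.le_inf' _ _ fun j hj => ?_
    exact walkWeight_ge_of_le w _ j i (by simp at hj; omega)
  have h2 : (0:ℤ) ≤ i * Wmax (V := V) w :=
    mul_nonneg (by positivity) (Wmax_nonneg w)
  unfold eVal
  omega

/-- The inner `sup` over Bob's strategies. -/
noncomputable def SupB (i : ℕ) (σ : List V → V) (u : V) : ℤ :=
  sSup {y : ℤ | ∃ τ, BobStrat E VA τ ∧ y = eVal w VA i σ τ u}

lemma eStar_def (i : ℕ) (u : V) :
    eStar E w VA i u =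
      sInf {x : ℤ | ∃ σ, AliceStrat E VA σ ∧ x = SupB E w VA i σ u} := rfl

/-- The default (positional, memoryless) strategy, valid for both players. -/
noncomputable def str0 (hout : ∀ v : V, ∃ x, E v x) : List V → V :=
  fun l => s0 E hout (l.headD (Classical.arbitrary V))

lemma str0_alice (hout : ∀ v : V, ∃ x, E v x) : AliceStrat E VA (str0 E hout) :=
  fun x h _ => s0_edge E hout x

lemma str0_bob (hout : ∀ v : V, ∃ x, E v x) : BobStrat E VA (str0 E hout) :=
  fun x h _ => s0_edge E hout x

lemma BSet_nonempty (hout : ∀ v : V, ∃ x, E v x) (i : ℕ) (σ : List V → V) (u : V) :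
    {y : ℤ | ∃ τ, BobStrat E VA τ ∧ y = eVal w VA i σ τ u}.Nonempty :=
  ⟨_, str0 E hout, str0_bob E VA hout, rfl⟩

lemma BSet_bddAbove (i : ℕ) (σ : List V → V) (u : V) :
    BddAbove {y : ℤ | ∃ τ, BobStrat E VA τ ∧ y = eVal w VA i σ τ u} := by
  refine ⟨i * Wmax (V := V) w, ?_⟩
  rintro y ⟨τ, _, rfl⟩
  exact eVal_le w VA i σ τ u

lemma le_SupB (i : ℕ) (σ τ : List V → V) (hτ : BobStrat E VA τ) (u : V) :
    eVal w VA i σ τ u ≤ SupB E w VA i σ u :=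
  le_csSup (BSet_bddAbove E w VA i σ u) ⟨τ, hτ, rfl⟩

lemma SupB_le (hout : ∀ v : V, ∃ x, E v x) (i : ℕ) (σ : List V → V) (u : V) (b : ℤ)
    (h : ∀ τ, BobStrat E VA τ → eVal w VA i σ τ u ≤ b) : SupB E w VA i σ u ≤ b := by
  refine csSup_le (BSet_nonempty E w VA hout i σ u) ?_
  rintro y ⟨τ, hτ, rfl⟩
  exact h τ hτ

lemma SupB_nonneg (hout : ∀ v : V, ∃ x, E v x) (i : ℕ) (σ : List V → V) (u : V) :
    0 ≤ SupB E w VA i σ u :=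
  le_trans (eVal_nonneg w VA i σ (str0 E hout) u)
    (le_SupB E w VA i σ _ (str0_bob E VA hout) u)

lemma exists_SupB_eq (hout : ∀ v : V, ∃ x, E v x) (i : ℕ) (σ : List V → V) (u : V) :
    ∃ τ, BobStrat E VA τ ∧ SupB E w VA i σ u = eVal w VA i σ τ u :=
  Int.csSup_mem (BSet_nonempty E w VA hout i σ u) (BSet_bddAbove E w VA i σ u)

lemma ASet_nonempty (hout : ∀ v : V, ∃ x, E v x) (i : ℕ) (u : V) :
    {x : ℤ | ∃ σ, AliceStrat E VA σ ∧ x = SupB E w VA i σ u}.Nonempty :=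
  ⟨_, str0 E hout, str0_alice E VA hout, rfl⟩

lemma ASet_bddBelow (hout : ∀ v : V, ∃ x, E v x) (i : ℕ) (u : V) :
    BddBelow {x : ℤ | ∃ σ, AliceStrat E VA σ ∧ x = SupB E w VA i σ u} := by
  refine ⟨0, ?_⟩
  rintro x ⟨σ, _, rfl⟩
  exact SupB_nonneg E w VA hout i σ u

lemma eStar_le_SupB (hout : ∀ v : V, ∃ x, E v x) (i : ℕ) (σ : List V → V)
    (hσ : AliceStrat E VA σ) (u : V) : eStar E w VA i u ≤ SupB E w VA i σ u := by
  rw [eStar_def]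
  exact csInf_le (ASet_bddBelow E w VA hout i u) ⟨σ, hσ, rfl⟩

lemma le_eStar (hout : ∀ v : V, ∃ x, E v x) (i : ℕ) (u : V) (b : ℤ)
    (h : ∀ σ, AliceStrat E VA σ → b ≤ SupB E w VA i σ u) : b ≤ eStar E w VA i u := by
  rw [eStar_def]
  refine le_csInf (ASet_nonempty E w VA hout i u) ?_
  rintro x ⟨σ, hσ, rfl⟩
  exact h σ hσ

lemma exists_eStar_eq (hout : ∀ v : V, ∃ x, E v x) (i : ℕ) (u : V) :
    ∃ σ, AliceStrat E VA σ ∧ eStar E w VA i u = SupB E w VA i σ u := by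
  rw [eStar_def]
  exact Int.csInf_mem (ASet_nonempty E w VA hout i u) (ASet_bddBelow E w VA hout i u)

lemma eStar_nonneg (hout : ∀ v : V, ∃ x, E v x) (i : ℕ) (u : V) :
    0 ≤ eStar E w VA i u := by
  refine le_eStar E w VA hout i u 0 fun σ _ => SupB_nonneg E w VA hout i σ u

lemma eStar_zero (hout : ∀ v : V, ∃ x, E v x) (u : V) : eStar E w VA 0 u = 0 := by
  refine le_antisymm ?_ (eStar_nonneg E w VA hout 0 u)
  refine le_trans (eStar_le_SupB E w VA hout 0 (str0 E hout) (str0_alice E VA hout) u) ?_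
  refine SupB_le E w VA hout 0 _ u 0 fun τ _ => ?_
  rw [eVal_zero]

/-- The finite set of successors of `u`. -/
noncomputable def EdgeSet (u : V) : Finset V := Finset.univ.filter (fun v => E u v)

lemma mem_EdgeSet {u v : V} : v ∈ EdgeSet E u ↔ E u v := by simp [EdgeSet]

lemma EdgeSet_nonempty (hout : ∀ v : V, ∃ x, E v x) (u : V) : (EdgeSet E u).Nonempty := by
  obtain ⟨x, hx⟩ := hout u
  exact ⟨x, (mem_EdgeSet E).2 hx⟩

/-- The Bellman operator. -/
noncomputable def Phi (hout : ∀ v : V, ∃ x, E v x) (f : V → ℤ) (u : V) : ℤ :=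
  if u ∈ VA then
    (EdgeSet E u).inf' (EdgeSet_nonempty E hout u) (fun v => max 0 (f v - w u v))
  else
    (EdgeSet E u).sup' (EdgeSet_nonempty E hout u) (fun v => max 0 (f v - w u v))

/-- Bellman iteration. -/
noncomputable def bell (hout : ∀ v : V, ∃ x, E v x) : ℕ → V → ℤ
  | 0 => fun _ => 0
  | (i+1) => Phi E w VA hout (bell hout i)

lemma Phi_nonneg (hout : ∀ v : V, ∃ x, E v x) (f : V → ℤ) (u : V) :
    0 ≤ Phi E w VA hout f u := by
  unfold Phi
  split
  · exact Finset.le_inf' _ _ fun v _ => le_max_left _ _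
  · obtain ⟨v, hv⟩ := EdgeSet_nonempty E hout u
    exact le_trans (le_max_left 0 (f v - w u v))
      (Finset.le_sup' (f := fun v => max 0 (f v - w u v)) hv)

lemma Phi_mono (hout : ∀ v : V, ∃ x, E v x) (f g : V → ℤ) (hfg : ∀ v, f v ≤ g v) (u : V) :
    Phi E w VA hout f u ≤ Phi E w VA hout g u := by
  unfold Phi
  split
  · refine Finset.le_inf' _ _ fun v hv => ?_
    exact le_trans (Finset.inf'_le _ hv) (max_le_max le_rfl (by have := hfg v; omega))
  · exact Finset.sup'_mono_fun fun v _ => max_le_max le_rfl (by have := hfg v; omega)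

lemma bell_nonneg (hout : ∀ v : V, ∃ x, E v x) (i : ℕ) (u : V) :
    0 ≤ bell E w VA hout i u := by
  cases i with
  | zero => exact le_refl 0
  | succ i => exact Phi_nonneg E w VA hout _ u

lemma bell_succ_le (hout : ∀ v : V, ∃ x, E v x) (i : ℕ) (u : V) :
    bell E w VA hout i u ≤ bell E w VA hout (i+1) u := by
  induction i generalizing u with
  | zero => exact Phi_nonneg E w VA hout _ u
  | succ i ih => exact Phi_mono E w VA hout _ _ (fun v => ih v) u

lemma bell_mono (hout : ∀ v : V, ∃ x, E v x) {i j : ℕ} (hij : i ≤ j) (u : V) :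
    bell E w VA hout i u ≤ bell E w VA hout j u := by
  induction j with
  | zero => simp only [Nat.le_zero] at hij; subst hij; exact le_refl _
  | succ j ih =>
    rcases Nat.lt_or_ge i (j+1) with h | h
    · exact le_trans (ih (by omega)) (bell_succ_le E w VA hout j u)
    · have : i = j + 1 := by omega
      subst this; exact le_refl _

/-- Glue a first move with continuation strategies (depending on the first vertex reached). -/
noncomputable def glue (first : V → V) (rest : V → List V → V) : List V → V :=
  fun l => if 2 ≤ l.length then
      rest ((l.dropLast).getLast?.getD (Classical.arbitrary V)) l.dropLast
    else first (l.headD (Classical.arbitrary V))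

lemma glue_one (first : V → V) (rest : V → List V → V) (x : V) :
    glue first rest [x] = first x := by simp [glue]

lemma glue_alice (first : V → V) (rest : V → List V → V)
    (hfirst : ∀ x ∈ VA, E x (first x)) (hrest : ∀ v, AliceStrat E VA (rest v)) :
    AliceStrat E VA (glue first rest) := by
  intro x h hx
  match h with
  | [] => rw [glue_one]; exact hfirst x hx
  | y :: h' =>
    have hlen : 2 ≤ (x :: y :: h').length := by simp
    have hd : (x :: y :: h').dropLast = x :: (y :: h').dropLast := by
      simp [List.dropLast]
    show E x (glue first rest (x :: y :: h'))
    unfold glue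
    rw [if_pos hlen, hd]
    exact hrest _ x ((y :: h').dropLast) hx

lemma glue_bob (first : V → V) (rest : V → List V → V)
    (hfirst : ∀ x, x ∉ VA → E x (first x)) (hrest : ∀ v, BobStrat E VA (rest v)) :
    BobStrat E VA (glue first rest) := by
  intro x h hx
  match h with
  | [] => rw [glue_one]; exact hfirst x hx
  | y :: h' =>
    have hlen : 2 ≤ (x :: y :: h').length := by simp
    have hd : (x :: y :: h').dropLast = x :: (y :: h').dropLast := by
      simp [List.dropLast]
    show E x (glue first rest (x :: y :: h'))
    unfold glue
    rw [if_pos hlen, hd]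
    exact hrest _ x ((y :: h').dropLast) hx

lemma shift_glue (first : V → V) (rest : V → List V → V) (u v : V) (l : List V)
    (hl : l.getLast? = some v) : shift u (glue first rest) l = rest v l := by
  have hne : l ≠ [] := fun h => by simp [h] at hl
  have hlen : 2 ≤ (l ++ [u]).length := by
    rcases l with _ | ⟨a, l'⟩
    · exact absurd rfl hne
    · simp
  unfold shift glue
  rw [if_pos hlen, List.dropLast_concat, hl]
  rfl

lemma shift_alice (σ : List V → V) (u : V) (hσ : AliceStrat E VA σ) :
    AliceStrat E VA (shift u σ) := by
  intro x h hx
  show E x (σ ((x :: h) ++ [u]))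
  rw [List.cons_append]
  exact hσ x (h ++ [u]) hx

lemma shift_bob (τ : List V → V) (u : V) (hτ : BobStrat E VA τ) :
    BobStrat E VA (shift u τ) := by
  intro x h hx
  show E x (τ ((x :: h) ++ [u]))
  rw [List.cons_append]
  exact hτ x (h ++ [u]) hx

lemma eStar_succ (hout : ∀ v : V, ∃ x, E v x) (i : ℕ) (u : V) :
    eStar E w VA (i+1) u = Phi E w VA hout (fun v => eStar E w VA i v) u := by
  apply le_antisymm
  · by_cases hu : u ∈ VA
    · rw [Phi, if_pos hu]
      obtain ⟨v, hv, hveq⟩ := Finset.exists_mem_eq_inf' (EdgeSet_nonempty E hout u)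
        (fun v => max 0 (eStar E w VA i v - w u v))
      rw [hveq]
      have hEuv : E u v := (mem_EdgeSet E).1 hv
      obtain ⟨σs, hσs, hσseq⟩ := exists_eStar_eq E w VA hout i v
      set σ : List V → V := glue (fun x => if x = u then v else s0 E hout x) (fun _ => σs)
        with hσdef
      have hσ : AliceStrat E VA σ := by
        refine glue_alice E VA _ _ (fun x _ => ?_) (fun _ => hσs)
        by_cases hxu : x = u
        · subst hxu; simp only [if_pos rfl]; exact hEuv
        · simp only [if_neg hxu]; exact s0_edge E hout x
      refine le_trans (eStar_le_SupB E w VA hout (i+1) σ hσ u) ?_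
      refine SupB_le E w VA hout (i+1) σ u _ fun τ hτ => ?_
      rw [eVal_succ]
      have h1 : play VA σ τ u 1 = v := by
        rw [play_one, if_pos hu, hσdef, glue_one]; simp
      rw [h1]
      have h2 : eVal w VA i (shift u σ) (shift u τ) v ≤ eStar E w VA i v := by
        have hcg : eVal w VA i (shift u σ) (shift u τ) v = eVal w VA i σs (shift u τ) v :=
          eVal_congr _ _ i _ _ _ _ v (fun l hl => shift_glue _ _ u v l hl) (fun l _ => rfl)
        rw [hcg, hσseq]
        exact le_SupB E w VA i σs (shift u τ) (shift_bob E VA τ u hτ) v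
      exact max_le_max le_rfl (by omega)
    · rw [Phi, if_neg hu]
      choose σs hσs hσseq using exists_eStar_eq E w VA hout i
      set σ : List V → V := glue (fun x => s0 E hout x) σs with hσdef
      have hσ : AliceStrat E VA σ :=
        glue_alice E VA _ _ (fun x _ => s0_edge E hout x) hσs
      refine le_trans (eStar_le_SupB E w VA hout (i+1) σ hσ u) ?_
      refine SupB_le E w VA hout (i+1) σ u _ fun τ hτ => ?_
      rw [eVal_succ]
      set v := play VA σ τ u 1 with hv
      have hEuv : E u v := by
        rw [hv, play_one, if_neg hu]
        exact hτ u [] hu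
      have h2 : eVal w VA i (shift u σ) (shift u τ) v ≤ eStar E w VA i v := by
        have hcg : eVal w VA i (shift u σ) (shift u τ) v = eVal w VA i (σs v) (shift u τ) v :=
          eVal_congr _ _ i _ _ _ _ v (fun l hl => shift_glue _ _ u v l hl) (fun l _ => rfl)
        rw [hcg, hσseq]
        exact le_SupB E w VA i (σs v) (shift u τ) (shift_bob E VA τ u hτ) v
      refine le_trans (max_le_max le_rfl (show eVal w VA i (shift u σ) (shift u τ) v - w u v ≤
        eStar E w VA i v - w u v by omega)) ?_
      exact Finset.le_sup' (f := fun v => max 0 (eStar E w VA i v - w u v))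
        ((mem_EdgeSet E).2 hEuv)
  · by_cases hu : u ∈ VA
    · rw [Phi, if_pos hu]
      obtain ⟨σ, hσ, hσeq⟩ := exists_eStar_eq E w VA hout (i+1) u
      rw [hσeq]
      set v := σ [u] with hvdef
      have hEuv : E u v := hσ u [] hu
      refine le_trans (Finset.inf'_le _ ((mem_EdgeSet E).2 hEuv)) ?_
      have hsh : AliceStrat E VA (shift u σ) := shift_alice E VA σ u hσ
      obtain ⟨τs, hτs, hτseq⟩ := exists_SupB_eq E w VA hout i (shift u σ) v
      set τ : List V → V := glue (fun x => s0 E hout x) (fun _ => τs) with hτdef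
      have hτ : BobStrat E VA τ :=
        glue_bob E VA _ _ (fun x _ => s0_edge E hout x) (fun _ => hτs)
      have h1 : play VA σ τ u 1 = v := by rw [play_one, if_pos hu]
      have h3 : eStar E w VA i v ≤ SupB E w VA i (shift u σ) v :=
        eStar_le_SupB E w VA hout i (shift u σ) hsh v
      have h4 : eVal w VA (i+1) σ τ u = max 0 (SupB E w VA i (shift u σ) v - w u v) := by
        rw [eVal_succ, h1]
        have hcg : eVal w VA i (shift u σ) (shift u τ) v = eVal w VA i (shift u σ) τs v :=
          eVal_congr _ _ i _ _ _ _ v (fun l _ => rfl) (fun l hl => shift_glue _ _ u v l hl)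
        rw [hcg, ← hτseq]
      calc max 0 (eStar E w VA i v - w u v) ≤ max 0 (SupB E w VA i (shift u σ) v - w u v) :=
            max_le_max le_rfl (by omega)
        _ = eVal w VA (i+1) σ τ u := h4.symm
        _ ≤ SupB E w VA (i+1) σ u := le_SupB E w VA (i+1) σ τ hτ u
    · rw [Phi, if_neg hu]
      refine le_eStar E w VA hout (i+1) u _ fun σ hσ => ?_
      refine Finset.sup'_le _ _ fun v hv => ?_
      have hEuv : E u v := (mem_EdgeSet E).1 hv
      have hsh : AliceStrat E VA (shift u σ) := shift_alice E VA σ u hσ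
      obtain ⟨τs, hτs, hτseq⟩ := exists_SupB_eq E w VA hout i (shift u σ) v
      set τ : List V → V := glue (fun x => if x = u then v else s0 E hout x) (fun _ => τs)
        with hτdef
      have hτ : BobStrat E VA τ := by
        refine glue_bob E VA _ _ (fun x _ => ?_) (fun _ => hτs)
        by_cases hxu : x = u
        · subst hxu; simp only [if_pos rfl]; exact hEuv
        · simp only [if_neg hxu]; exact s0_edge E hout x
      have h1 : play VA σ τ u 1 = v := by
        rw [play_one, if_neg hu, hτdef, glue_one]; simp
      have h3 : eStar E w VA i v ≤ SupB E w VA i (shift u σ) v :=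
        eStar_le_SupB E w VA hout i (shift u σ) hsh v
      have h4 : eVal w VA (i+1) σ τ u = max 0 (SupB E w VA i (shift u σ) v - w u v) := by
        rw [eVal_succ, h1]
        have hcg : eVal w VA i (shift u σ) (shift u τ) v = eVal w VA i (shift u σ) τs v :=
          eVal_congr _ _ i _ _ _ _ v (fun l _ => rfl) (fun l hl => shift_glue _ _ u v l hl)
        rw [hcg, ← hτseq]
      calc max 0 (eStar E w VA i v - w u v) ≤ max 0 (SupB E w VA i (shift u σ) v - w u v) :=
            max_le_max le_rfl (by omega)
        _ = eVal w VA (i+1) σ τ u := h4.symm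
        _ ≤ SupB E w VA (i+1) σ u := le_SupB E w VA (i+1) σ τ hτ u

lemma eStar_eq_bell (hout : ∀ v : V, ∃ x, E v x) (i : ℕ) (u : V) :
    eStar E w VA i u = bell E w VA hout i u := by
  induction i generalizing u with
  | zero => exact eStar_zero E w VA hout u
  | succ i ih =>
    rw [eStar_succ E w VA hout i u]
    show Phi E w VA hout _ u = Phi E w VA hout _ u
    congr 1
    funext v
    exact ih v

lemma descent (hout : ∀ v : V, ∃ x, E v x) (j : ℕ) (x : V)
    (h : bell E w VA hout j x < bell E w VA hout (j+1) x) :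
    ∃ v, E x v ∧ bell E w VA hout (j+1) x ≤ bell E w VA hout j v - w x v ∧
      (∀ m, j = m + 1 → bell E w VA hout m v < bell E w VA hout (m+1) v) := by
  match j with
  | 0 =>
    have h0 : ∀ v : V, bell E w VA hout 0 v = 0 := fun _ => rfl
    by_cases hx : x ∈ VA
    · have h1 : bell E w VA hout 1 x = (EdgeSet E x).inf' (EdgeSet_nonempty E hout x)
          (fun v => max 0 (bell E w VA hout 0 v - w x v)) := by
        show Phi E w VA hout _ x = _
        rw [Phi, if_pos hx]
      obtain ⟨v, hv, hveq⟩ := Finset.exists_mem_eq_inf' (EdgeSet_nonempty E hout x)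
        (fun v => max 0 (bell E w VA hout 0 v - w x v))
      refine ⟨v, (mem_EdgeSet E).1 hv, ?_, fun m hm => by omega⟩
      rw [h1, hveq]
      rw [h1, hveq] at h
      simp only [h0] at h ⊢
      omega
    · have h1 : bell E w VA hout 1 x = (EdgeSet E x).sup' (EdgeSet_nonempty E hout x)
          (fun v => max 0 (bell E w VA hout 0 v - w x v)) := by
        show Phi E w VA hout _ x = _
        rw [Phi, if_neg hx]
      obtain ⟨v, hv, hveq⟩ := Finset.exists_mem_eq_sup' (EdgeSet_nonempty E hout x)
        (fun v => max 0 (bell E w VA hout 0 v - w x v))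
      refine ⟨v, (mem_EdgeSet E).1 hv, ?_, fun m hm => by omega⟩
      rw [h1, hveq]
      rw [h1, hveq] at h
      simp only [h0] at h ⊢
      omega
  | (m+1) =>
    by_cases hx : x ∈ VA
    · obtain ⟨v, hv, hveq⟩ := Finset.exists_mem_eq_inf' (EdgeSet_nonempty E hout x)
        (fun v => max 0 (bell E w VA hout m v - w x v))
      have hA : bell E w VA hout (m+1) x = max 0 (bell E w VA hout m v - w x v) := by
        rw [show bell E w VA hout (m+1) x = Phi E w VA hout (bell E w VA hout m) x from rfl,
          Phi, if_pos hx, hveq]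
      have hB : bell E w VA hout (m+1+1) x ≤ max 0 (bell E w VA hout (m+1) v - w x v) := by
        rw [show bell E w VA hout (m+1+1) x = Phi E w VA hout (bell E w VA hout (m+1)) x from rfl,
          Phi, if_pos hx]
        exact Finset.inf'_le _ hv
      refine ⟨v, (mem_EdgeSet E).1 hv, by omega, fun m' hm' => ?_⟩
      obtain rfl : m' = m := by omega
      omega
    · obtain ⟨v, hv, hveq⟩ := Finset.exists_mem_eq_sup' (EdgeSet_nonempty E hout x)
        (fun v => max 0 (bell E w VA hout (m+1) v - w x v))
      have hA : bell E w VA hout (m+1+1) x = max 0 (bell E w VA hout (m+1) v - w x v) := by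
        rw [show bell E w VA hout (m+1+1) x = Phi E w VA hout (bell E w VA hout (m+1)) x from rfl,
          Phi, if_neg hx, hveq]
      have hB : max 0 (bell E w VA hout m v - w x v) ≤ bell E w VA hout (m+1) x := by
        rw [show bell E w VA hout (m+1) x = Phi E w VA hout (bell E w VA hout m) x from rfl,
          Phi, if_neg hx]
        exact Finset.le_sup' (f := fun v => max 0 (bell E w VA hout m v - w x v)) hv
      refine ⟨v, (mem_EdgeSet E).1 hv, by omega, fun m' hm' => ?_⟩
      obtain rfl : m' = m := by omega
      omega

lemma bell_stab (hout : ∀ v : V, ∃ x, E v x)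
    (hnoneg : ∀ (c : ℕ → V) (m : ℕ), 1 ≤ m → IsWalk E c m → c m = c 0 →
      0 ≤ walkWeight w c m) (u0 : V) :
    bell E w VA hout (Fintype.card V + 1) u0 ≤ bell E w VA hout (Fintype.card V) u0 := by
  set n := Fintype.card V with hn
  by_contra hcon
  push_neg at hcon
  -- build the descent chain
  set F : ℕ → V → V := fun k x =>
    if h : bell E w VA hout (n - k) x < bell E w VA hout (n - k + 1) x then
      (descent E w VA hout (n - k) x h).choose
    else x with hF
  set c : ℕ → V := fun k => Nat.rec u0 (fun k ih => F k ih) k with hcdef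
  have hc0 : c 0 = u0 := rfl
  have hcs : ∀ k, c (k+1) = F k (c k) := fun k => rfl
  have inv : ∀ k, k ≤ n → bell E w VA hout (n-k) (c k) < bell E w VA hout (n-k+1) (c k) := by
    intro k
    induction k with
    | zero =>
      intro _
      rw [hc0]
      simpa using hcon
    | succ k ih =>
      intro hk1
      have hik := ih (by omega)
      have hc : c (k+1) = (descent E w VA hout (n-k) (c k) hik).choose := by
        rw [hcs, hF]
        exact dif_pos hik
      have spec := (descent E w VA hout (n-k) (c k) hik).choose_spec
      rw [← hc] at spec
      exact spec.2.2 (n - (k+1)) (by omega)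
  have edge : ∀ k, k ≤ n → E (c k) (c (k+1)) ∧
      bell E w VA hout (n-k+1) (c k) ≤
        bell E w VA hout (n-k) (c (k+1)) - w (c k) (c (k+1)) := by
    intro k hk
    have hik := inv k hk
    have hc : c (k+1) = (descent E w VA hout (n-k) (c k) hik).choose := by
      rw [hcs, hF]
      exact dif_pos hik
    have spec := (descent E w VA hout (n-k) (c k) hik).choose_spec
    rw [← hc] at spec
    exact ⟨spec.1, spec.2.1⟩
  have tele : ∀ a b, a ≤ b → b ≤ n+1 →
      bell E w VA hout (n+1-a) (c a) ≤ bell E w VA hout (n+1-b) (c b) -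
        ∑ k ∈ Finset.Ico a b, w (c k) (c (k+1)) := by
    intro a b hab
    induction b, hab using Nat.le_induction with
    | base => intro _; simp
    | succ b hab ih =>
      intro hb1
      have hbn : b ≤ n := by omega
      have ihb := ih (by omega)
      have he := (edge b hbn).2
      rw [Finset.sum_Ico_succ_top hab]
      rw [show n+1-b = n-b+1 from by omega] at ihb
      have h1 : bell E w VA hout (n-b+1) (c b) ≤
          bell E w VA hout (n+1-(b+1)) (c (b+1)) - w (c b) (c (b+1)) := by
        rw [show n+1-(b+1) = n-b from by omega]
        exact he
      omega
  -- pigeonhole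
  have hcard : Fintype.card V < Fintype.card (Fin (n+2)) := by simp [hn]
  obtain ⟨x, y, hxy, hexy⟩ :=
    Fintype.exists_ne_map_eq_of_card_lt (fun k : Fin (n+2) => c k.val) hcard
  have hvne : x.val ≠ y.val := fun hh => hxy (Fin.val_injective hh)
  obtain ⟨a, b, hab, hbn1, heqab⟩ : ∃ a b : ℕ, a < b ∧ b ≤ n+1 ∧ c a = c b := by
    rcases Nat.lt_or_ge x.val y.val with hh | hh
    · exact ⟨x.val, y.val, hh, by omega, hexy⟩
    · exact ⟨y.val, x.val, by omega, by omega, hexy.symm⟩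
  -- the removed cycle has nonnegative weight
  have hcyc : 0 ≤ walkWeight w (fun m => c (a + m)) (b - a) := by
    refine hnoneg _ (b-a) (by omega) ?_ ?_
    · intro m hm
      exact (edge (a+m) (by omega)).1
    · show c (a + (b-a)) = c (a + 0)
      rw [show a + (b-a) = b from by omega, Nat.add_zero]
      exact heqab.symm
  have hsum : ∑ k ∈ Finset.Ico a b, w (c k) (c (k+1)) = walkWeight w (fun m => c (a + m)) (b-a) := by
    rw [walkWeight, Finset.sum_Ico_eq_sum_range (fun k => w (c k) (c (k+1))) a b]
    rfl
  have htel := tele a b (le_of_lt hab) hbn1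
  rw [← heqab] at htel
  have hmono := bell_mono E w VA hout (show n+1-b ≤ n-a from by omega) (c a)
  have hinv := inv a (by omega)
  rw [show n+1-a = n-a+1 from by omega] at htel
  omega

lemma shorten (E' : V → V → Prop)
    (hnn : ∀ (c : ℕ → V) (m : ℕ), 1 ≤ m → IsWalk E' c m → c m = c 0 → 0 ≤ walkWeight w c m)
    (k : ℕ) (p : ℕ → V) (hp : IsWalk E' p k) :
    ∃ (q : ℕ → V) (m : ℕ), IsWalk E' q m ∧ q 0 = p 0 ∧
      walkWeight w q m ≤ walkWeight w p k ∧
      ∀ i j, i ≤ m → j ≤ m → q i = q j → i = j := by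
  induction k using Nat.strong_induction_on generalizing p with
  | _ k IH =>
    by_cases hinj : ∀ i j, i ≤ k → j ≤ k → p i = p j → i = j
    · exact ⟨p, k, hp, rfl, le_rfl, hinj⟩
    · push_neg at hinj
      obtain ⟨i0, j0, hi0, hj0, heq0, hne0⟩ := hinj
      obtain ⟨a, b, hab, hbk, hpab⟩ : ∃ a b : ℕ, a < b ∧ b ≤ k ∧ p a = p b := by
        rcases Nat.lt_or_ge i0 j0 with hh | hh
        · exact ⟨i0, j0, hh, hj0, heq0⟩
        · exact ⟨j0, i0, by omega, hi0, heq0.symm⟩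
      set d := b - a with hd
      set q' : ℕ → V := fun m => if m < a then p m else p (m + d) with hq'
      have hq'eq : ∀ m, m ≤ a → q' m = p m := by
        intro m hm
        rcases Nat.lt_or_ge m a with hh | hh
        · simp only [hq', if_pos hh]
        · have hma : m = a := by omega
          simp only [hq', if_neg (show ¬ m < a by omega)]
          rw [show m + d = b from by omega, hma]
          exact hpab.symm
      have hT : ∀ m, a ≤ m → q' m = p (m + d) := by
        intro m hm
        simp only [hq', if_neg (by omega : ¬ m < a)]
      have hd1 : 1 ≤ d := by omega
      have hkd : k - d < k := by omega
      have hakd : a ≤ k - d := by omega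
      have hq'walk : IsWalk E' q' (k - d) := by
        intro i hi
        rcases Nat.lt_or_ge (i+1) a with hia | hia
        · rw [hq'eq i (by omega), hq'eq (i+1) (by omega)]
          exact hp i (by omega)
        · rcases Nat.lt_or_ge i a with hia2 | hia2
          · have e1 : i + 1 = a := by omega
            rw [hq'eq i (by omega), hT (i+1) (by omega)]
            have e2 : p (i+1+d) = p (i+1) := by
              rw [e1, show a + d = b from by omega]
              exact hpab.symm
            rw [e2]
            exact hp i (by omega)
          · rw [hT i (by omega), hT (i+1) (by omega),
              show i + 1 + d = i + d + 1 from by omega]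
            exact hp (i+d) (by omega)
      -- weight decomposition
      have hA : walkWeight w p k =
          (∑ i ∈ Finset.Ico 0 a, w (p i) (p (i+1))) +
          (∑ i ∈ Finset.Ico a b, w (p i) (p (i+1))) +
          (∑ i ∈ Finset.Ico b k, w (p i) (p (i+1))) := by
        rw [walkWeight, Finset.range_eq_Ico,
          ← Finset.sum_Ico_consecutive (fun i => w (p i) (p (i+1))) (Nat.zero_le b) hbk,
          ← Finset.sum_Ico_consecutive (fun i => w (p i) (p (i+1))) (Nat.zero_le a)
            (le_of_lt hab)]
      have hB : walkWeight w q' (k - d) =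
          (∑ i ∈ Finset.Ico 0 a, w (p i) (p (i+1))) +
          (∑ i ∈ Finset.Ico b k, w (p i) (p (i+1))) := by
        rw [walkWeight, Finset.range_eq_Ico,
          ← Finset.sum_Ico_consecutive (fun i => w (q' i) (q' (i+1))) (Nat.zero_le a) hakd]
        congr 1
        · refine Finset.sum_congr rfl fun i hi => ?_
          rw [Finset.mem_Ico] at hi
          rw [hq'eq i (by omega), hq'eq (i+1) (by omega)]
        · rw [Finset.sum_Ico_eq_sum_range (fun i => w (q' i) (q' (i+1))) a (k-d),
            Finset.sum_Ico_eq_sum_range (fun i => w (p i) (p (i+1))) b k,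
            show k - d - a = k - b from by omega]
          refine Finset.sum_congr rfl fun i _ => ?_
          rw [hT (a+i) (by omega), hT (a+i+1) (by omega),
            show a + i + d = b + i from by omega,
            show a + i + 1 + d = b + i + 1 from by omega]
      have hC : (∑ i ∈ Finset.Ico a b, w (p i) (p (i+1))) =
          walkWeight w (fun m => p (a + m)) d := by
        rw [Finset.sum_Ico_eq_sum_range (fun i => w (p i) (p (i+1))) a b, walkWeight]
        refine Finset.sum_congr (by rw [hd]) fun i _ => ?_
        show w (p (a+i)) (p (a+i+1)) = w (p (a+i)) (p (a+(i+1)))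
        rw [Nat.add_assoc]
      have hcyc : 0 ≤ walkWeight w (fun m => p (a + m)) d := by
        refine hnn _ d hd1 ?_ ?_
        · intro m hm
          show E' (p (a+m)) (p (a+(m+1)))
          rw [show a + (m+1) = a + m + 1 from by omega]
          exact hp (a+m) (by omega)
        · show p (a + d) = p (a + 0)
          rw [show a + d = b from by omega, Nat.add_zero]
          exact hpab.symm
      obtain ⟨q, m, h1, h2, h3, h4⟩ := IH (k - d) hkd q' hq'walk
      refine ⟨q, m, h1, by rw [h2, hq'eq 0 (Nat.zero_le a)], ?_, h4⟩
      have : walkWeight w q' (k - d) ≤ walkWeight w p k := by omega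
      omega

lemma walkWeight_lb
    (hnoneg : ∀ (c : ℕ → V) (m : ℕ), 1 ≤ m → IsWalk E c m → c m = c 0 →
      0 ≤ walkWeight w c m)
    (p : ℕ → V) (k : ℕ) (hp : IsWalk E p k) :
    -(Fintype.card V * Wmax (V := V) w) ≤ walkWeight w p k := by
  obtain ⟨q, m, h1, h2, h3, h4⟩ := shorten _ E hnoneg k p hp
  have hminj : Function.Injective (fun i : Fin (m+1) => q i.val) := by
    intro i j hij
    exact Fin.ext (h4 i.val j.val (by omega) (by omega) hij)
  have hm : m + 1 ≤ Fintype.card V := by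
    calc m + 1 = Fintype.card (Fin (m+1)) := (Fintype.card_fin _).symm
      _ ≤ Fintype.card V := Fintype.card_le_of_injective _ hminj
  exact le_trans (walkWeight_ge_of_le w q m (Fintype.card V) (by omega)) h3

lemma posPlay_zero (s t : V → V) (u : V) : posPlay VA s t u 0 = u := rfl

lemma posPlay_succ (s t : V → V) (u : V) (k : ℕ) :
    posPlay VA s t u (k+1) =
      if posPlay VA s t u k ∈ VA then s (posPlay VA s t u k) else t (posPlay VA s t u k) := rfl

lemma posPlay_isWalk (s t : V → V) (hs : ∀ v ∈ VA, E v (s v)) (ht : ∀ v, v ∉ VA → E v (t v))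
    (u : V) (k : ℕ) : IsWalk E (posPlay VA s t u) k := by
  intro i _
  rw [posPlay_succ]
  by_cases hx : posPlay VA s t u i ∈ VA
  · rw [if_pos hx]; exact hs _ hx
  · rw [if_neg hx]; exact ht _ hx

lemma posOutcome_nonneg (s t : V → V) (u : V) : 0 ≤ posOutcome w VA s t u :=
  le_max_left _ _

lemma posOutcome_le (hnoneg : ∀ (c : ℕ → V) (m : ℕ), 1 ≤ m → IsWalk E c m → c m = c 0 →
      0 ≤ walkWeight w c m)
    (s t : V → V) (hs : ∀ v ∈ VA, E v (s v)) (ht : ∀ v, v ∉ VA → E v (t v)) (u : V) :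
    posOutcome w VA s t u ≤ Fintype.card V * Wmax (V := V) w := by
  have h1 : -(Fintype.card V * Wmax (V := V) w) ≤
      sInf {z : ℤ | ∃ i : ℕ, z = walkWeight w (posPlay VA s t u) i} := by
    refine le_csInf ⟨_, ⟨0, rfl⟩⟩ ?_
    rintro z ⟨i, rfl⟩
    exact walkWeight_lb E w hnoneg _ i (posPlay_isWalk E VA s t hs ht u i)
  have h2 : (0:ℤ) ≤ Fintype.card V * Wmax (V := V) w :=
    mul_nonneg (by positivity) (Wmax_nonneg w)
  unfold posOutcome
  omega

lemma PSet_nonempty (hout : ∀ v : V, ∃ x, E v x) (s : V → V) (u : V) :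
    {y : ℤ | ∃ t : V → V, (∀ v ∉ VA, E v (t v)) ∧ y = posOutcome w VA s t u}.Nonempty :=
  ⟨_, s0 E hout, fun v _ => s0_edge E hout v, rfl⟩

lemma PSet_bddAbove (hnoneg : ∀ (c : ℕ → V) (m : ℕ), 1 ≤ m → IsWalk E c m → c m = c 0 →
      0 ≤ walkWeight w c m) (s : V → V) (hs : ∀ v ∈ VA, E v (s v)) (u : V) :
    BddAbove {y : ℤ | ∃ t : V → V, (∀ v ∉ VA, E v (t v)) ∧ y = posOutcome w VA s t u} := by
  refine ⟨Fintype.card V * Wmax (V := V) w, ?_⟩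
  rintro y ⟨t, ht, rfl⟩
  exact posOutcome_le E w VA hnoneg s t hs ht u

lemma ISet_nonempty (hout : ∀ v : V, ∃ x, E v x) (u : V) :
    {x : ℤ | ∃ s : V → V, (∀ v ∈ VA, E v (s v)) ∧
      x = sSup {y : ℤ | ∃ t : V → V, (∀ v ∉ VA, E v (t v)) ∧ y = posOutcome w VA s t u}}.Nonempty :=
  ⟨_, s0 E hout, fun v _ => s0_edge E hout v, rfl⟩

lemma ISet_bddBelow (hout : ∀ v : V, ∃ x, E v x)
    (hnoneg : ∀ (c : ℕ → V) (m : ℕ), 1 ≤ m → IsWalk E c m → c m = c 0 →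
      0 ≤ walkWeight w c m) (u : V) :
    BddBelow {x : ℤ | ∃ s : V → V, (∀ v ∈ VA, E v (s v)) ∧
      x = sSup {y : ℤ | ∃ t : V → V, (∀ v ∉ VA, E v (t v)) ∧ y = posOutcome w VA s t u}} := by
  refine ⟨0, ?_⟩
  rintro x ⟨s, hs, rfl⟩
  refine le_trans (posOutcome_nonneg w VA s (s0 E hout) u) ?_
  exact le_csSup (PSet_bddAbove E w VA hnoneg s hs u) ⟨s0 E hout, fun v _ => s0_edge E hout v, rfl⟩

/-- The fixed-point property of `bell n`. -/
lemma bell_fix (hout : ∀ v : V, ∃ x, E v x)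
    (hnoneg : ∀ (c : ℕ → V) (m : ℕ), 1 ≤ m → IsWalk E c m → c m = c 0 →
      0 ≤ walkWeight w c m) (u : V) :
    Phi E w VA hout (bell E w VA hout (Fintype.card V)) u =
      bell E w VA hout (Fintype.card V) u :=
  le_antisymm (bell_stab E w VA hout hnoneg u) (bell_succ_le E w VA hout (Fintype.card V) u)

/-- Alice's optimal positional strategy extracted from the fixed point. -/
noncomputable def sOpt (hout : ∀ v : V, ∃ x, E v x) : V → V := fun x =>
  if hx : x ∈ VA then
    (Finset.exists_mem_eq_inf' (EdgeSet_nonempty E hout x)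
      (fun v => max 0 (bell E w VA hout (Fintype.card V) v - w x v))).choose
  else s0 E hout x

lemma sOpt_edge (hout : ∀ v : V, ∃ x, E v x) (x : V) : E x (sOpt E w VA hout x) := by
  unfold sOpt
  split
  · next hx =>
    exact (mem_EdgeSet E).1 (Finset.exists_mem_eq_inf' (EdgeSet_nonempty E hout x)
      (fun v => max 0 (bell E w VA hout (Fintype.card V) v - w x v))).choose_spec.1
  · exact s0_edge E hout x

lemma sOpt_step (hout : ∀ v : V, ∃ x, E v x)
    (hnoneg : ∀ (c : ℕ → V) (m : ℕ), 1 ≤ m → IsWalk E c m → c m = c 0 →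
      0 ≤ walkWeight w c m) (x : V) (hx : x ∈ VA) :
    max 0 (bell E w VA hout (Fintype.card V) (sOpt E w VA hout x)
      - w x (sOpt E w VA hout x)) = bell E w VA hout (Fintype.card V) x := by
  rw [← bell_fix E w VA hout hnoneg x, Phi, if_pos hx]
  have hs : sOpt E w VA hout x = (Finset.exists_mem_eq_inf' (EdgeSet_nonempty E hout x)
      (fun v => max 0 (bell E w VA hout (Fintype.card V) v - w x v))).choose := by
    unfold sOpt
    rw [dif_pos hx]
  rw [hs]
  exact ((Finset.exists_mem_eq_inf' (EdgeSet_nonempty E hout x)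
    (fun v => max 0 (bell E w VA hout (Fintype.card V) v - w x v))).choose_spec).2.symm

lemma bell_bob_step (hout : ∀ v : V, ∃ x, E v x)
    (hnoneg : ∀ (c : ℕ → V) (m : ℕ), 1 ≤ m → IsWalk E c m → c m = c 0 →
      0 ≤ walkWeight w c m) (x v : V) (hx : x ∉ VA) (hE : E x v) :
    bell E w VA hout (Fintype.card V) v - w x v ≤ bell E w VA hout (Fintype.card V) x := by
  rw [← bell_fix E w VA hout hnoneg x, Phi, if_neg hx]
  exact le_trans (le_max_right 0 _)
    (Finset.le_sup' (f := fun v => max 0 (bell E w VA hout (Fintype.card V) v - w x v))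
      ((mem_EdgeSet E).2 hE))

lemma bell_posPlay_le (hout : ∀ v : V, ∃ x, E v x)
    (hnoneg : ∀ (c : ℕ → V) (m : ℕ), 1 ≤ m → IsWalk E c m → c m = c 0 →
      0 ≤ walkWeight w c m)
    (t : V → V) (ht : ∀ v, v ∉ VA → E v (t v)) (u : V) (k : ℕ) :
    bell E w VA hout (Fintype.card V) (posPlay VA (sOpt E w VA hout) t u k) ≤
      bell E w VA hout (Fintype.card V) u +
        walkWeight w (posPlay VA (sOpt E w VA hout) t u) k := by
  induction k with
  | zero => simp [posPlay_zero, walkWeight_zero]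
  | succ k ih =>
    rw [walkWeight_succ, posPlay_succ]
    by_cases hx : posPlay VA (sOpt E w VA hout) t u k ∈ VA
    · rw [if_pos hx]
      have := sOpt_step E w VA hout hnoneg _ hx
      have h2 : bell E w VA hout (Fintype.card V)
            (sOpt E w VA hout (posPlay VA (sOpt E w VA hout) t u k))
          - w (posPlay VA (sOpt E w VA hout) t u k)
            (sOpt E w VA hout (posPlay VA (sOpt E w VA hout) t u k)) ≤
          bell E w VA hout (Fintype.card V) (posPlay VA (sOpt E w VA hout) t u k) := by
        omega
      omega
    · rw [if_neg hx]
      have h2 := bell_bob_step E w VA hout hnoneg _ _ hx (ht _ hx)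
      omega

lemma posOutcome_le_bell (hout : ∀ v : V, ∃ x, E v x)
    (hnoneg : ∀ (c : ℕ → V) (m : ℕ), 1 ≤ m → IsWalk E c m → c m = c 0 →
      0 ≤ walkWeight w c m)
    (t : V → V) (ht : ∀ v, v ∉ VA → E v (t v)) (u : V) :
    posOutcome w VA (sOpt E w VA hout) t u ≤ bell E w VA hout (Fintype.card V) u := by
  have h1 : -(bell E w VA hout (Fintype.card V) u) ≤
      sInf {z : ℤ | ∃ i : ℕ, z = walkWeight w (posPlay VA (sOpt E w VA hout) t u) i} := by
    refine le_csInf ⟨_, ⟨0, rfl⟩⟩ ?_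
    rintro z ⟨i, rfl⟩
    have := bell_posPlay_le E w VA hout hnoneg t ht u i
    have := bell_nonneg E w VA hout (Fintype.card V) (posPlay VA (sOpt E w VA hout) t u i)
    omega
  have h2 := bell_nonneg E w VA hout (Fintype.card V) u
  unfold posOutcome
  omega
end EnergyAux

/-- In a game graph with no closed walk of strictly negative
total weight, the value of the `n`-round game (with `n = |V|`) equals the value
of the infinite-duration energy game, at every vertex. -/
theorem n_round_game_eq_infinite_game {V : Type*} [Fintype V]
    (E : V → V → Prop) (w : V → V → ℤ) (VA : Set V)
    (hout : ∀ v : V, ∃ x, E v x)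
    (hnoneg : ∀ (c : ℕ → V) (m : ℕ), 1 ≤ m → IsWalk E c m → c m = c 0 →
      0 ≤ walkWeight w c m)
    (u : V) :
    eStar E w VA (Fintype.card V) u = eStarInf E w VA u := by
  haveI : Nonempty V := ⟨u⟩
  open EnergyAux in
  apply le_antisymm
  · -- `eStar ≤ eStarInf`
    refine le_csInf (ISet_nonempty E w VA hout u) ?_
    rintro x ⟨s, hs, rfl⟩
    set σs : List V → V := fun l => s (l.headD (Classical.arbitrary V)) with hσsdef
    have hσsA : AliceStrat E VA σs := fun x h hx => hs x hx
    refine le_trans (eStar_le_SupB E w VA hout (Fintype.card V) σs hσsA u) ?_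
    refine SupB_le E w VA hout (Fintype.card V) σs u _ fun τ hτ => ?_
    set Es : V → V → Prop := fun x y => E x y ∧ (x ∈ VA → y = s x) with hEsdef
    have hnn' : ∀ (c : ℕ → V) (m : ℕ), 1 ≤ m → IsWalk Es c m → c m = c 0 →
        0 ≤ walkWeight w c m :=
      fun c m h1 h2 h3 => hnoneg c m h1 (fun i hi => (h2 i hi).1) h3
    have hwalkEs : ∀ k, IsWalk Es (play VA σs τ u) k := by
      intro k i hi
      show Es ((playAux VA σs τ u i).1) ((playAux VA σs τ u (i+1)).1)
      simp only [playAux]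
      by_cases hx : (playAux VA σs τ u i).1 ∈ VA
      · rw [if_pos hx]
        exact ⟨hs _ hx, fun _ => rfl⟩
      · rw [if_neg hx]
        exact ⟨hτ _ _ hx, fun hc => absurd hc hx⟩
    obtain ⟨j, hj, hjeq⟩ := Finset.exists_mem_eq_inf'
      (Finset.nonempty_range_add_one (n := Fintype.card V))
      (fun j => walkWeight w (play VA σs τ u) j)
    obtain ⟨q, m, hq1, hq2, hq3, hq4⟩ := shorten w Es hnn' j (play VA σs τ u) (hwalkEs j)
    have hq0 : q 0 = u := hq2
    set t : V → V := fun x => if hx : ∃ i, i < m ∧ q i = x then q (hx.choose + 1)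
      else s0 E hout x with htdef
    have ht : ∀ v, E v (t v) := by
      intro v
      rw [htdef]
      dsimp only
      split
      · next hx =>
        obtain ⟨hi, hqv⟩ := hx.choose_spec
        have h7 := (hq1 _ hi).1
        rw [hqv] at h7
        exact h7
      · exact s0_edge E hout v
    have hplay : ∀ i, i ≤ m → posPlay VA s t u i = q i := by
      intro i
      induction i with
      | zero => intro _; rw [posPlay_zero, hq0]
      | succ i ih =>
        intro hi1
        have hi : i < m := by omega
        have hpi := ih (by omega)
        rw [posPlay_succ, hpi]
        by_cases hx : q i ∈ VA
        · rw [if_pos hx]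
          exact ((hq1 i hi).2 hx).symm
        · rw [if_neg hx, htdef]
          dsimp only
          have hex : ∃ i', i' < m ∧ q i' = q i := ⟨i, hi, rfl⟩
          rw [dif_pos hex]
          obtain ⟨hi', hq'⟩ := hex.choose_spec
          have heqi : hex.choose = i := hq4 _ _ (by omega) (by omega) hq'
          rw [heqi]
    have hww : walkWeight w (posPlay VA s t u) m = walkWeight w q m :=
      walkWeight_congr w _ _ m hplay
    have hbZ : BddBelow {z : ℤ | ∃ i : ℕ, z = walkWeight w (posPlay VA s t u) i} := by
      refine ⟨-(Fintype.card V * Wmax (V := V) w), ?_⟩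
      rintro z ⟨i, rfl⟩
      exact walkWeight_lb E w hnoneg _ i (posPlay_isWalk E VA s t hs (fun v _ => ht v) u i)
    have h5 : sInf {z : ℤ | ∃ i : ℕ, z = walkWeight w (posPlay VA s t u) i} ≤
        walkWeight w (play VA σs τ u) j := by
      refine le_trans (csInf_le hbZ ⟨m, rfl⟩) ?_
      rw [hww]; exact hq3
    have h6 : eVal w VA (Fintype.card V) σs τ u ≤ posOutcome w VA s t u := by
      unfold eVal
      rw [hjeq]
      unfold posOutcome
      omega
    exact le_trans h6 (le_csSup (PSet_bddAbove E w VA hnoneg s hs u) ⟨t, fun v _ => ht v, rfl⟩)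
  · -- `eStarInf ≤ eStar`
    rw [eStar_eq_bell E w VA hout (Fintype.card V) u]
    refine le_trans (csInf_le (ISet_bddBelow E w VA hout hnoneg u)
      ⟨sOpt E w VA hout, fun v _ => sOpt_edge E w VA hout v, rfl⟩) ?_
    refine csSup_le (PSet_nonempty E w VA hout _ u) ?_
    rintro y ⟨t, ht, rfl⟩
    exact posOutcome_le_bell E w VA hout hnoneg t ht u
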